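/- Let u, w be elements of the Weyl group of a Kac–Moody algebra with w = u s_α, u < w (Bruhat order, ℓ(w) = ℓ(u)+1), α a positive real root, and let β be a positive root with s_α β a negative root. Then ⟨β, α^∨⟩ > 0 and uβ = wβ − ⟨β, α^∨⟩ wα is a positive root whenever wβ is positive and wα is negative. -/
import Mathlib


/-- Abstract data of a (Kac–Moody) root system together with its Weyl group action,
positive/negative roots, reflections in (real) roots, coroot pairing and length function,
with the standard properties used in the paper. -/
structure RootData (W : Type) (V : Type) [Group W] [AddCommGroup V] [Module ℝ V] where
  /-- the linear action of the Weyl group -/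
  act : W →* (V ≃ₗ[ℝ] V)
  /-- the set of roots -/
  roots : Set V
  /-- the set of positive roots Δ⁺ -/
  pos : Set V
  pos_subset : pos ⊆ roots
  /-- Δ = Δ⁺ ∪ Δ⁻ with Δ⁻ = −Δ⁺ -/
  roots_eq : roots = pos ∪ (-pos)
  disj : Disjoint pos (-pos)
  stable : ∀ w : W, ∀ α ∈ roots, act w α ∈ roots
  /-- pair λ α = ⟨λ, α^∨⟩ -/
  pair : V → V → ℝ
  /-- the reflection s_α in a root α -/
  refl : V → W
  refl_apply : ∀ α ∈ roots, ∀ lam : V, act (refl α) lam = lam - pair lam α • α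
  refl_mul_self : ∀ α ∈ roots, refl α * refl α = 1
  /-- the length function ℓ -/
  len : W → ℕ
  /-- standard: ℓ(w s_α) < ℓ(w) ↔ wα < 0, for a positive real root α -/
  length_lt_iff : ∀ w : W, ∀ α ∈ pos, (len (w * refl α) < len w ↔ act w α ∈ -pos)
  /-- a root which is a nonnegative combination of positive roots is positive -/
  pos_of_add : ∀ γ ∈ roots, ∀ a b : V, ∀ c : ℝ,
    a ∈ pos → b ∈ pos → 0 ≤ c → γ = a + c • b → γ ∈ pos

/-- Φ(w) = Δ⁺ ∩ wΔ⁻. -/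
def RootData.Phi {W V : Type} [Group W] [AddCommGroup V] [Module ℝ V]
    (D : RootData W V) (w : W) : Set V :=
  {β | β ∈ D.pos ∧ D.act w⁻¹ β ∈ -D.pos}

/-- Case I of Lemma 2.4: let w = u s_α, u < w (ℓ(w) = ℓ(u)+1), α a positive
real root, and β a positive root with s_α β negative. Then ⟨β, α^∨⟩ > 0 and
uβ = wβ − ⟨β, α^∨⟩ wα is a positive root, given that wβ is positive and wα is negative. -/
theorem case_I_of_lemma
    {W V : Type} [Group W] [AddCommGroup V] [Module ℝ V]
    (D : RootData W V) (u w : W) (α β : V)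
    (hα : α ∈ D.pos)
    (hw : w = u * D.refl α)
    (hlen : D.len w = D.len u + 1)
    (hβ : β ∈ D.pos)
    (hsβ : D.act (D.refl α) β ∈ -D.pos)
    (hwβ : D.act w β ∈ D.pos)
    (hwα : D.act w α ∈ -D.pos) :
    0 < D.pair β α ∧
    D.act u β = D.act w β - D.pair β α • D.act w α ∧
    D.act u β ∈ D.pos := by
  have hαr : α ∈ D.roots := D.pos_subset hα
  have hβr : β ∈ D.roots := D.pos_subset hβ
  -- pair β α > 0
  have hpair : 0 < D.pair β α := by
    by_contra h
    push_neg at h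
    have hs : D.act (D.refl α) β = β + (-(D.pair β α)) • α := by
      rw [D.refl_apply α hαr β]; module
    have hroot : D.act (D.refl α) β ∈ D.roots := D.stable _ β hβr
    have hpos : D.act (D.refl α) β ∈ D.pos :=
      D.pos_of_add _ hroot β α (-(D.pair β α)) hβ hα (by linarith) hs
    exact D.disj.ne_of_mem hpos hsβ rfl
  refine ⟨hpair, ?_, ?_⟩
  · have hu : u = w * D.refl α := by
      rw [hw, mul_assoc, D.refl_mul_self α hαr, mul_one]
    have : D.act u β = D.act w (D.act (D.refl α) β) := by
      rw [hu, map_mul]; rfl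
    rw [this, D.refl_apply α hαr β, map_sub, map_smul]
  · have hu : u = w * D.refl α := by
      rw [hw, mul_assoc, D.refl_mul_self α hαr, mul_one]
    have heq : D.act u β = D.act w β + D.pair β α • (-(D.act w α)) := by
      rw [hu, map_mul]
      show D.act w (D.act (D.refl α) β) = _
      rw [D.refl_apply α hαr β, map_sub, map_smul]
      module
    have hroot : D.act u β ∈ D.roots := D.stable _ β hβr
    have hnwα : -(D.act w α) ∈ D.pos := by
      simpa using hwα
    exact D.pos_of_add _ hroot _ _ _ hwβ hnwα (le_of_lt hpair) heq
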